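/- Let m, ℓ be nonzero complex numbers on the figure-eight geometric A-polynomial curve (satisfying m⁴ − (1 − m² − 2m⁴ − m⁶ + m⁸)ℓ + m⁴ℓ² = 0, with the nondegeneracy conditions m⁴ ≠ 1, 1 + m²ℓ ≠ 0, m² + ℓ ≠ 0), and set z = −(m² − m⁻²)/(1 + m²ℓ), w = (m² + ℓ)/(m² − m⁻²), z'' = 1 − z⁻¹, w'' = 1 − w⁻¹. Then (1/2)·(z''·w'' − 1)·z·w = (1 − m² − 2m⁴ − m⁶ + m⁸ − 2m⁴ℓ) / (2m⁴(m² − m⁻²)). -/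

import Mathlib

theorem fig8_torsion_on_curve (m ℓ : ℂ) (hm : m ≠ 0) (hl : ℓ ≠ 0)
    (hA : m ^ 4 - (1 - m ^ 2 - 2 * m ^ 4 - m ^ 6 + m ^ 8) * ℓ + m ^ 4 * ℓ ^ 2 = 0)
    (hm4 : m ^ 4 ≠ 1) (h1 : 1 + m ^ 2 * ℓ ≠ 0) (h2 : m ^ 2 + ℓ ≠ 0) :
    let z : ℂ := -(m ^ 2 - m⁻¹ ^ 2) / (1 + m ^ 2 * ℓ)
    let w : ℂ := (m ^ 2 + ℓ) / (m ^ 2 - m⁻¹ ^ 2)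
    let z'' : ℂ := 1 - z⁻¹
    let w'' : ℂ := 1 - w⁻¹
    (1 / 2) * (z'' * w'' - 1) * z * w
      = (1 - m ^ 2 - 2 * m ^ 4 - m ^ 6 + m ^ 8 - 2 * m ^ 4 * ℓ)
        / (2 * m ^ 4 * (m ^ 2 - m⁻¹ ^ 2)) := by
  intro z w z'' w''
  have hm2 : (m:ℂ) ^ 2 ≠ 0 := pow_ne_zero 2 hm
  have h3 : (1:ℂ) - m ^ 4 ≠ 0 := sub_ne_zero.mpr (Ne.symm hm4)
  have h4 : m ^ 4 - 1 ≠ 0 := sub_ne_zero.mpr hm4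
  have hd : m ^ 2 - m⁻¹ ^ 2 ≠ 0 := by
    rw [show m ^ 2 - m⁻¹ ^ 2 = (m ^ 4 - 1) / m ^ 2 by field_simp]
    exact div_ne_zero h4 hm2
  have hz : z ≠ 0 := div_ne_zero (neg_ne_zero.mpr hd) h1
  have hw : w ≠ 0 := div_ne_zero h2 hd
  have hzv : z = (1 - m ^ 4) / (m ^ 2 * (1 + m ^ 2 * ℓ)) := by
    simp only [z]
    rw [show m ^ 2 - m⁻¹ ^ 2 = (m ^ 4 - 1) / m ^ 2 by field_simp]
    field_simp
    ring
  have hwv : w = m ^ 2 * (m ^ 2 + ℓ) / (m ^ 4 - 1) := by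
    simp only [w]
    rw [show m ^ 2 - m⁻¹ ^ 2 = (m ^ 4 - 1) / m ^ 2 by field_simp]
    rw [div_div_eq_mul_div]
    ring
  have hz'' : z'' = (1 - m ^ 4 - m ^ 2 * (1 + m ^ 2 * ℓ)) / (1 - m ^ 4) := by
    simp only [z'', hzv]
    rw [inv_div]
    field_simp
  have hw'' : w'' = (m ^ 2 * (m ^ 2 + ℓ) - (m ^ 4 - 1)) / (m ^ 2 * (m ^ 2 + ℓ)) := by
    simp only [w'', hwv]
    rw [inv_div]
    field_simp
  rw [hz'', hw'', hzv, hwv,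
    show m ^ 2 - m⁻¹ ^ 2 = (m ^ 4 - 1) / m ^ 2 by field_simp]
  field_simp
  linear_combination (m^2) * hA
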